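/- Assume α_T = ∑_t ℓ_{0,t} > 0. Then the optimal charging cost V is continuously differentiable on [0, ∞) (even though it is defined piecewise on the intervals determined by the energy thresholds), and consequently the charging unit price λ_e(L_e) = V(L_e)/(L_e + α_T) is continuously differentiable on [0, ∞). -/

import Mathlib

open Finset

/-- Total electricity cost of a charging profile `ℓe` over time slots `1,…,T`,
with cost functions `f_t(ℓ) = η_t ℓ^n`. -/
noncomputable def chargCost (T : ℕ) (n : ℝ) (η ℓ0 ℓe : ℕ → ℝ) : ℝ :=
  ∑ t ∈ Finset.Icc 1 T, η t * (ℓ0 t + ℓe t) ^ n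

/-- Feasibility of a charging profile: nonnegative, and summing to the charging need `Le`. -/
def ChargFeasible (T : ℕ) (Le : ℝ) (ℓe : ℕ → ℝ) : Prop :=
  (∀ t ∈ Finset.Icc 1 T, 0 ≤ ℓe t) ∧ ∑ t ∈ Finset.Icc 1 T, ℓe t = Le

/-- Optimal charging cost `V(L_e)`. -/
noncomputable def Vopt (T : ℕ) (n : ℝ) (η ℓ0 : ℕ → ℝ) (Le : ℝ) : ℝ :=
  sInf {c | ∃ ℓe, ChargFeasible T Le ℓe ∧ chargCost T n η ℓ0 ℓe = c}

/-- Cumulative nonflexible load `α_t = ∑_{s=1}^t ℓ_{0,s}`. -/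
noncomputable def alphaC (ℓ0 : ℕ → ℝ) (t : ℕ) : ℝ := ∑ s ∈ Finset.Icc 1 t, ℓ0 s

/-- Cost of the nonflexible load after time `t`: `β_t = ∑_{s=t+1}^T f_s(ℓ_{0,s})`. -/
noncomputable def betaC (T : ℕ) (n : ℝ) (η ℓ0 : ℕ → ℝ) (t : ℕ) : ℝ :=
  ∑ s ∈ Finset.Icc (t + 1) T, η s * ℓ0 s ^ n

/-- Energy thresholds `L_e^{(t)}` (for `0 ≤ t ≤ T-1`, with `L_e^{(0)} = 0`). -/
noncomputable def Lth (n : ℝ) (η ℓ0 : ℕ → ℝ) (t : ℕ) : ℝ :=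
  if t = 0 then 0
  else (∑ s ∈ Finset.Icc 1 t, (η (t + 1) / η s) ^ (1 / (n - 1))) * ℓ0 (t + 1) - alphaC ℓ0 t

/-- Charging unit price `λ_e(L_e) = V(L_e) / (L_e + α_T)`. -/
noncomputable def lamE (T : ℕ) (n : ℝ) (η ℓ0 : ℕ → ℝ) (Le : ℝ) : ℝ :=
  Vopt T n η ℓ0 Le / (Le + alphaC ℓ0 T)

/-- if `α_T = ∑_t ℓ_{0,t} > 0`, the optimal charging cost `V` is
continuously differentiable on `[0, ∞)`, hence so is the charging unit price
`λ_e(L_e) = V(L_e)/(L_e + α_T)`. -/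

lemma gradIneqAux {n : ℝ} (hn : (2:ℝ) ≤ n) {a b : ℝ} (ha : 0 ≤ a) (hb : 0 ≤ b) :
    b ^ n + n * b ^ (n - 1) * (a - b) ≤ a ^ n := by
  have hn1 : (0:ℝ) < n - 1 := by linarith
  rcases eq_or_lt_of_le hb with hb0 | hb0
  · rw [← hb0, Real.zero_rpow (by linarith : n ≠ 0), Real.zero_rpow hn1.ne']
    simpa using Real.rpow_nonneg ha n
  · have hbne : b ≠ 0 := hb0.ne'
    have hs : -1 ≤ a / b - 1 := by
      have h0 : 0 ≤ a / b := div_nonneg ha hb0.le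
      linarith
    have key := one_add_mul_self_le_rpow_one_add hs (by linarith : (1:ℝ) ≤ n)
    rw [show (1 : ℝ) + (a / b - 1) = a / b by ring, Real.div_rpow ha hb0.le] at key
    have hbp : (0:ℝ) < b ^ n := Real.rpow_pos_of_pos hb0 n
    have key2 := (le_div_iff₀ hbp).mp key
    have hbeq : b ^ (n - 1) = b ^ n / b := by
      rw [Real.rpow_sub hb0, Real.rpow_one]
    rw [hbeq]
    have hexp : b ^ n + n * (b ^ n / b) * (a - b) = (1 + n * (a / b - 1)) * b ^ n := by
      field_simp
    rw [hexp]
    exact key2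

/-- Water-filling allocation at water level `μ`. -/
noncomputable def gAux (n : ℝ) (η ℓ0 : ℕ → ℝ) (t : ℕ) (μ : ℝ) : ℝ :=
  max 0 ((μ / η t) ^ (1 / (n - 1)) - ℓ0 t)

/-- Total allocated energy at water level `μ`. -/
noncomputable def mAux (T : ℕ) (n : ℝ) (η ℓ0 : ℕ → ℝ) (μ : ℝ) : ℝ :=
  ∑ t ∈ Finset.Icc 1 T, gAux n η ℓ0 t μ

lemma masterAux (T : ℕ) (n : ℝ) (η ℓ0 : ℕ → ℝ)
    (hn : (2:ℝ) ≤ n)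
    (hη : ∀ t ∈ Finset.Icc 1 T, 0 < η t)
    (hℓ0 : ∀ t ∈ Finset.Icc 1 T, 0 ≤ ℓ0 t)
    {μ : ℝ} (hμ0 : 0 ≤ μ)
    (y : ℕ → ℝ) (hy : ∀ t ∈ Finset.Icc 1 T, 0 ≤ y t) :
    chargCost T n η ℓ0 (fun t => gAux n η ℓ0 t μ)
      + n * μ * ((∑ t ∈ Finset.Icc 1 T, y t) - mAux T n η ℓ0 μ)
      ≤ chargCost T n η ℓ0 y := by
  have hn1 : (0:ℝ) < n - 1 := by linarith
  have hnpos : (0:ℝ) < n := by linarith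
  have per : ∀ t ∈ Finset.Icc 1 T,
      η t * (ℓ0 t + gAux n η ℓ0 t μ) ^ n + n * μ * (y t - gAux n η ℓ0 t μ)
        ≤ η t * (ℓ0 t + y t) ^ n := by
    intro t ht
    have hηt := hη t ht
    have hℓ0t := hℓ0 t ht
    have hyt := hy t ht
    simp only [gAux]
    set A := (μ / η t) ^ (1 / (n - 1)) with hA
    have hA0 : 0 ≤ A := Real.rpow_nonneg (div_nonneg hμ0 hηt.le) _
    have hAc : η t * A ^ (n - 1) = μ := by
      rw [hA, ← Real.rpow_mul (div_nonneg hμ0 hηt.le), one_div,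
        inv_mul_cancel₀ hn1.ne', Real.rpow_one, mul_comm, div_mul_cancel₀ _ hηt.ne']
    rcases le_total A (ℓ0 t) with hcase | hcase
    · rw [max_eq_left (sub_nonpos.mpr hcase), add_zero, sub_zero]
      have hgrad := gradIneqAux hn (show (0:ℝ) ≤ ℓ0 t + y t by linarith) hℓ0t
      have h3 := mul_le_mul_of_nonneg_left hgrad hηt.le
      have hcoef : μ ≤ η t * ℓ0 t ^ (n - 1) := by
        calc μ = η t * A ^ (n - 1) := hAc.symm
          _ ≤ η t * ℓ0 t ^ (n - 1) :=
            mul_le_mul_of_nonneg_left (Real.rpow_le_rpow hA0 hcase hn1.le) hηt.le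
      have h2 : n * μ * y t ≤ n * (η t * ℓ0 t ^ (n - 1)) * y t :=
        mul_le_mul_of_nonneg_right
          (mul_le_mul_of_nonneg_left hcoef hnpos.le) hyt
      nlinarith [h3, h2]
    · rw [max_eq_right (sub_nonneg.mpr hcase), show ℓ0 t + (A - ℓ0 t) = A by ring]
      have hgrad := gradIneqAux hn (show (0:ℝ) ≤ ℓ0 t + y t by linarith) hA0
      have h3 := mul_le_mul_of_nonneg_left hgrad hηt.le
      rw [← hAc]
      nlinarith [h3]
  calc chargCost T n η ℓ0 (fun t => gAux n η ℓ0 t μ)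
        + n * μ * ((∑ t ∈ Finset.Icc 1 T, y t) - mAux T n η ℓ0 μ)
      = ∑ t ∈ Finset.Icc 1 T,
          (η t * (ℓ0 t + gAux n η ℓ0 t μ) ^ n + n * μ * (y t - gAux n η ℓ0 t μ)) := by
        simp only [chargCost, mAux]
        rw [Finset.sum_add_distrib, ← Finset.mul_sum, Finset.sum_sub_distrib]
    _ ≤ ∑ t ∈ Finset.Icc 1 T, η t * (ℓ0 t + y t) ^ n := Finset.sum_le_sum per
    _ = chargCost T n η ℓ0 y := rfl

lemma mZeroAux (T : ℕ) (n : ℝ) (η ℓ0 : ℕ → ℝ)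
    (hn : (2:ℝ) ≤ n) (hT : 2 ≤ T)
    (hη : ∀ t ∈ Finset.Icc 1 T, 0 < η t)
    (hℓ0 : ∀ t ∈ Finset.Icc 1 T, 0 ≤ ℓ0 t)
    (hord : ∀ s t : ℕ, 1 ≤ s → s ≤ t → t ≤ T →
      η s * ℓ0 s ^ (n - 1) ≤ η t * ℓ0 t ^ (n - 1)) :
    mAux T n η ℓ0 (η 1 * ℓ0 1 ^ (n - 1)) = 0 := by
  have hn1 : (0:ℝ) < n - 1 := by linarith
  have h1T : (1:ℕ) ∈ Finset.Icc 1 T := Finset.mem_Icc.mpr ⟨le_rfl, by omega⟩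
  have hη1 := hη 1 h1T
  have hℓ01 := hℓ0 1 h1T
  apply Finset.sum_eq_zero
  intro t ht
  have htm := Finset.mem_Icc.mp ht
  have hηt := hη t ht
  have hℓ0t := hℓ0 t ht
  have h1 : η 1 * ℓ0 1 ^ (n - 1) ≤ η t * ℓ0 t ^ (n - 1) := hord 1 t le_rfl htm.1 htm.2
  have h2 : (η 1 * ℓ0 1 ^ (n - 1)) / η t ≤ ℓ0 t ^ (n - 1) := by
    rw [div_le_iff₀ hηt]
    nlinarith [h1]
  have h3 : ((η 1 * ℓ0 1 ^ (n - 1)) / η t) ^ (1 / (n - 1)) ≤ ℓ0 t := by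
    calc ((η 1 * ℓ0 1 ^ (n - 1)) / η t) ^ (1 / (n - 1))
        ≤ (ℓ0 t ^ (n - 1)) ^ (1 / (n - 1)) :=
          Real.rpow_le_rpow
            (div_nonneg (mul_nonneg hη1.le (Real.rpow_nonneg hℓ01 _)) hηt.le) h2
            (by positivity)
      _ = ℓ0 t := by
          rw [← Real.rpow_mul hℓ0t, mul_one_div, div_self hn1.ne', Real.rpow_one]
  simp only [gAux]
  exact max_eq_left (sub_nonpos.mpr h3)

lemma mContAux (T : ℕ) (n : ℝ) (η ℓ0 : ℕ → ℝ) (hn : (2:ℝ) ≤ n) :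
    Continuous (mAux T n η ℓ0) := by
  have hn1 : (0:ℝ) < n - 1 := by linarith
  apply continuous_finset_sum
  intro t _
  apply continuous_const.max
  apply Continuous.sub _ continuous_const
  have h1 : Continuous fun μ : ℝ => μ / η t := continuous_id.div_const _
  have h2 : Continuous fun x : ℝ => x ^ (1 / (n - 1)) :=
    continuous_iff_continuousAt.mpr fun x =>
      Real.continuousAt_rpow_const x _ (Or.inr (by positivity))
  exact h2.comp h1

lemma mMonoAux (T : ℕ) (n : ℝ) (η ℓ0 : ℕ → ℝ)
    (hn : (2:ℝ) ≤ n) (hT : 2 ≤ T)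
    (hη : ∀ t ∈ Finset.Icc 1 T, 0 < η t)
    (hℓ0 : ∀ t ∈ Finset.Icc 1 T, 0 ≤ ℓ0 t) :
    StrictMonoOn (mAux T n η ℓ0) (Set.Ici (η 1 * ℓ0 1 ^ (n - 1))) := by
  intro a ha b hb hab
  have hn1 : (0:ℝ) < n - 1 := by linarith
  have hq0 : (0:ℝ) < 1 / (n - 1) := by positivity
  have h1T : (1:ℕ) ∈ Finset.Icc 1 T := Finset.mem_Icc.mpr ⟨le_rfl, by omega⟩
  have hη1 := hη 1 h1T
  have hℓ01 := hℓ0 1 h1T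
  have hμ1 : 0 ≤ η 1 * ℓ0 1 ^ (n - 1) := mul_nonneg hη1.le (Real.rpow_nonneg hℓ01 _)
  have ha' : η 1 * ℓ0 1 ^ (n - 1) ≤ a := ha
  have hb' : η 1 * ℓ0 1 ^ (n - 1) ≤ b := hb
  have ha0 : 0 ≤ a := le_trans hμ1 ha'
  have hsub : ∀ c : ℝ, η 1 * ℓ0 1 ^ (n - 1) ≤ c → ℓ0 1 ≤ (c / η 1) ^ (1 / (n - 1)) := by
    intro c hc
    calc ℓ0 1 = (ℓ0 1 ^ (n - 1)) ^ (1 / (n - 1)) := by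
          rw [← Real.rpow_mul hℓ01, mul_one_div, div_self hn1.ne', Real.rpow_one]
      _ ≤ (c / η 1) ^ (1 / (n - 1)) := by
          apply Real.rpow_le_rpow (Real.rpow_nonneg hℓ01 _) _ hq0.le
          rw [le_div_iff₀ hη1]
          nlinarith [hc]
  apply Finset.sum_lt_sum
  · intro t ht
    have hηt := hη t ht
    simp only [gAux]
    apply max_le_max le_rfl
    apply sub_le_sub_right
    exact Real.rpow_le_rpow (div_nonneg ha0 hηt.le) (by gcongr) hq0.le
  · refine ⟨1, h1T, ?_⟩
    simp only [gAux]
    rw [max_eq_right (sub_nonneg.mpr (hsub a ha')), max_eq_right (sub_nonneg.mpr (hsub b hb'))]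
    have hlt : (a / η 1) ^ (1 / (n - 1)) < (b / η 1) ^ (1 / (n - 1)) := by
      exact Real.rpow_lt_rpow (div_nonneg ha0 hη1.le) (by gcongr) hq0
    linarith

lemma mSurjAux (T : ℕ) (n : ℝ) (η ℓ0 : ℕ → ℝ)
    (hn : (2:ℝ) ≤ n) (hT : 2 ≤ T)
    (hη : ∀ t ∈ Finset.Icc 1 T, 0 < η t)
    (hℓ0 : ∀ t ∈ Finset.Icc 1 T, 0 ≤ ℓ0 t)
    (hord : ∀ s t : ℕ, 1 ≤ s → s ≤ t → t ≤ T →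
      η s * ℓ0 s ^ (n - 1) ≤ η t * ℓ0 t ^ (n - 1)) :
    ∀ y : ℝ, 0 ≤ y → ∃ μ, (η 1 * ℓ0 1 ^ (n - 1)) ≤ μ ∧ mAux T n η ℓ0 μ = y := by
  intro y hy
  have hn1 : (0:ℝ) < n - 1 := by linarith
  have hq0 : (0:ℝ) < 1 / (n - 1) := by positivity
  have h1T : (1:ℕ) ∈ Finset.Icc 1 T := Finset.mem_Icc.mpr ⟨le_rfl, by omega⟩
  have hη1 := hη 1 h1T
  have hℓ01 := hℓ0 1 h1T
  set μ1 := η 1 * ℓ0 1 ^ (n - 1) with hμ1d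
  have hμ1 : 0 ≤ μ1 := mul_nonneg hη1.le (Real.rpow_nonneg hℓ01 _)
  set b := max μ1 (η 1 * (ℓ0 1 + y) ^ (n - 1)) with hbd
  have hμ1b : μ1 ≤ b := le_max_left _ _
  have hmb : y ≤ mAux T n η ℓ0 b := by
    have hg1 : y ≤ gAux n η ℓ0 1 b := by
      simp only [gAux]
      have h1 : η 1 * (ℓ0 1 + y) ^ (n - 1) ≤ b := le_max_right _ _
      have h2 : ℓ0 1 + y ≤ (b / η 1) ^ (1 / (n - 1)) := by
        calc ℓ0 1 + y = ((ℓ0 1 + y) ^ (n - 1)) ^ (1 / (n - 1)) := by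
              rw [← Real.rpow_mul (by linarith), mul_one_div, div_self hn1.ne', Real.rpow_one]
          _ ≤ (b / η 1) ^ (1 / (n - 1)) := by
              apply Real.rpow_le_rpow (Real.rpow_nonneg (by linarith) _) _ hq0.le
              rw [le_div_iff₀ hη1]
              nlinarith [h1]
      have h3 : y ≤ (b / η 1) ^ (1 / (n - 1)) - ℓ0 1 := by linarith
      exact le_trans h3 (le_max_right _ _)
    calc y ≤ gAux n η ℓ0 1 b := hg1
      _ ≤ mAux T n η ℓ0 b := by
          simp only [mAux]
          exact Finset.single_le_sum (f := fun t => gAux n η ℓ0 t b)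
            (fun t _ => le_max_left _ _) h1T
  have hIcc : y ∈ Set.Icc (mAux T n η ℓ0 μ1) (mAux T n η ℓ0 b) := by
    rw [mZeroAux T n η ℓ0 hn hT hη hℓ0 hord]
    exact ⟨hy, hmb⟩
  obtain ⟨μ, hμmem, hμeq⟩ :=
    intermediate_value_Icc hμ1b (mContAux T n η ℓ0 hn).continuousOn hIcc
  exact ⟨μ, hμmem.1, hμeq⟩

theorem Vopt_and_lamE_contDiff
    (T : ℕ) (n : ℝ) (η ℓ0 : ℕ → ℝ)
    (hT : 2 ≤ T) (hn : (2 : ℝ) ≤ n)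
    (hη : ∀ t ∈ Finset.Icc 1 T, 0 < η t)
    (hℓ0 : ∀ t ∈ Finset.Icc 1 T, 0 ≤ ℓ0 t)
    (hord : ∀ s t : ℕ, 1 ≤ s → s ≤ t → t ≤ T →
      η s * ℓ0 s ^ (n - 1) ≤ η t * ℓ0 t ^ (n - 1))
    (hα : 0 < alphaC ℓ0 T) :
    ∃ V' lam' : ℝ → ℝ,
      ContinuousOn V' (Set.Ici 0) ∧ ContinuousOn lam' (Set.Ici 0) ∧
      (∀ x ∈ Set.Ici (0 : ℝ), HasDerivWithinAt (Vopt T n η ℓ0) (V' x) (Set.Ici 0) x) ∧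
      (∀ x ∈ Set.Ici (0 : ℝ), HasDerivWithinAt (lamE T n η ℓ0) (lam' x) (Set.Ici 0) x) := by
  classical
  have hn1 : (0:ℝ) < n - 1 := by linarith
  have hnpos : (0:ℝ) < n := by linarith
  have h1T : (1:ℕ) ∈ Finset.Icc 1 T := Finset.mem_Icc.mpr ⟨le_rfl, by omega⟩
  have hη1 := hη 1 h1T
  have hℓ01 := hℓ0 1 h1T
  set μ1 : ℝ := η 1 * ℓ0 1 ^ (n - 1) with hμ1d
  have hμ1 : 0 ≤ μ1 := mul_nonneg hη1.le (Real.rpow_nonneg hℓ01 _)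
  have hm_nonneg : ∀ μ : ℝ, 0 ≤ mAux T n η ℓ0 μ := by
    intro μ
    exact Finset.sum_nonneg fun t _ => le_max_left _ _
  haveI : (Set.Ici μ1).OrdConnected := Set.ordConnected_Ici
  haveI : (Set.Ici (0:ℝ)).OrdConnected := Set.ordConnected_Ici
  -- the order isomorphism between water levels and energies
  set e : Set.Ici μ1 → Set.Ici (0:ℝ) := fun μ => ⟨mAux T n η ℓ0 μ, hm_nonneg μ⟩ with hed
  have he_mono : StrictMono e := by
    intro a b hab
    exact Subtype.mk_lt_mk.mpr
      (mMonoAux T n η ℓ0 hn hT hη hℓ0 a.2 b.2 (Subtype.coe_lt_coe.mpr hab))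
  have he_surj : Function.Surjective e := by
    intro y
    obtain ⟨μ, hμge, hμeq⟩ := mSurjAux T n η ℓ0 hn hT hη hℓ0 hord y y.2
    exact ⟨⟨μ, hμge⟩, Subtype.ext hμeq⟩
  set iso : Set.Ici μ1 ≃o Set.Ici (0:ℝ) :=
    StrictMono.orderIsoOfSurjective e he_mono he_surj with hisod
  set μf : ℝ → ℝ :=
    fun Le => if h : 0 ≤ Le then ((iso.symm ⟨Le, h⟩ : Set.Ici μ1) : ℝ) else μ1 with hμfd
  have hμf1 : ∀ (Le : ℝ) (h : 0 ≤ Le),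
      μf Le = ((iso.symm ⟨Le, h⟩ : Set.Ici μ1) : ℝ) := fun Le h => dif_pos h
  have hμf_ge : ∀ Le : ℝ, μ1 ≤ μf Le := by
    intro Le
    by_cases h : 0 ≤ Le
    · rw [hμf1 Le h]
      exact (iso.symm ⟨Le, h⟩).2
    · have : μf Le = μ1 := dif_neg h
      rw [this]
  have hμf_eq : ∀ Le : ℝ, 0 ≤ Le → mAux T n η ℓ0 (μf Le) = Le := by
    intro Le h
    have h2 := StrictMono.orderIsoOfSurjective_self_symm_apply e he_mono he_surj ⟨Le, h⟩
    have h3 := congrArg Subtype.val h2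
    rw [hμf1 Le h]
    exact h3
  have hμf_cont : ContinuousOn μf (Set.Ici 0) := by
    rw [continuousOn_iff_continuous_restrict]
    have hre : (Set.Ici (0:ℝ)).restrict μf
        = fun p : Set.Ici (0:ℝ) => ((iso.symm p : Set.Ici μ1) : ℝ) := by
      funext p
      have h4 : μf p.val = ((iso.symm ⟨p.val, p.2⟩ : Set.Ici μ1) : ℝ) := dif_pos p.2
      simpa [Set.restrict] using h4
    rw [show (Set.Ici (0:ℝ)).domRestrict μf = (Set.Ici (0:ℝ)).restrict μf from rfl, hre]
    exact continuous_subtype_val.comp (OrderIso.continuous iso.symm)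
  -- the value function formula
  have hformula : ∀ Le : ℝ, 0 ≤ Le →
      Vopt T n η ℓ0 Le = chargCost T n η ℓ0 (fun t => gAux n η ℓ0 t (μf Le)) := by
    intro Le hLe
    have hL : IsLeast {c | ∃ ℓe, ChargFeasible T Le ℓe ∧ chargCost T n η ℓ0 ℓe = c}
        (chargCost T n η ℓ0 (fun t => gAux n η ℓ0 t (μf Le))) := by
      constructor
      · refine ⟨fun t => gAux n η ℓ0 t (μf Le), ⟨fun t _ => le_max_left _ _, ?_⟩, rfl⟩
        exact hμf_eq Le hLe
      · rintro c ⟨y, hyf, rfl⟩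
        obtain ⟨hy0, hysum⟩ := hyf
        have hm := masterAux T n η ℓ0 hn hη hℓ0 (le_trans hμ1 (hμf_ge Le)) y hy0
        rw [hysum, hμf_eq Le hLe] at hm
        linarith [hm]
    exact hL.csInf_eq
  -- basic two-point bound
  have hbound : ∀ a b : ℝ, 0 ≤ a → 0 ≤ b →
      (b - a) * (n * μf a) ≤ Vopt T n η ℓ0 b - Vopt T n η ℓ0 a := by
    intro a b ha hb
    rw [hformula a ha, hformula b hb]
    have hm := masterAux T n η ℓ0 hn hη hℓ0 (le_trans hμ1 (hμf_ge a))
      (fun t => gAux n η ℓ0 t (μf b)) (fun t _ => le_max_left _ _)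
    have hsb : (∑ t ∈ Finset.Icc 1 T, gAux n η ℓ0 t (μf b)) = b := hμf_eq b hb
    have hsa : mAux T n η ℓ0 (μf a) = a := hμf_eq a ha
    rw [hsb, hsa] at hm
    linarith [hm]
  -- derivative of V
  have hVderiv : ∀ x ∈ Set.Ici (0:ℝ),
      HasDerivWithinAt (Vopt T n η ℓ0) (n * μf x) (Set.Ici 0) x := by
    intro x hx
    have hx0 : (0:ℝ) ≤ x := hx
    rw [hasDerivWithinAt_iff_isLittleO, Asymptotics.isLittleO_iff]
    intro ε hε
    have hcont : ContinuousWithinAt μf (Set.Ici 0) x := hμf_cont x hx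
    have hev1 : ∀ᶠ y in nhdsWithin x (Set.Ici 0), |μf y - μf x| < ε / n := by
      have h2 := Metric.tendsto_nhds.mp hcont (ε / n) (by positivity)
      simpa [Real.dist_eq] using h2
    filter_upwards [hev1, self_mem_nhdsWithin] with y hy1 hy2
    have hy0 : (0:ℝ) ≤ y := hy2
    have hlow := hbound x y hx0 hy0
    have hupp := hbound y x hy0 hx0
    simp only [smul_eq_mul, Real.norm_eq_abs]
    have habs1 : 0 ≤ Vopt T n η ℓ0 y - Vopt T n η ℓ0 x - (y - x) * (n * μf x) := by
      linarith [hlow]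
    rw [abs_of_nonneg habs1]
    have h3 : Vopt T n η ℓ0 y - Vopt T n η ℓ0 x - (y - x) * (n * μf x)
        ≤ n * ((y - x) * (μf y - μf x)) := by nlinarith [hupp]
    have h5 : n * ((y - x) * (μf y - μf x)) ≤ n * (|y - x| * |μf y - μf x|) := by
      apply mul_le_mul_of_nonneg_left _ hnpos.le
      calc (y - x) * (μf y - μf x) ≤ |(y - x) * (μf y - μf x)| := le_abs_self _
        _ = |y - x| * |μf y - μf x| := abs_mul _ _
    have h6 : n * (|y - x| * |μf y - μf x|) ≤ n * (|y - x| * (ε / n)) := by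
      apply mul_le_mul_of_nonneg_left _ hnpos.le
      exact mul_le_mul_of_nonneg_left hy1.le (abs_nonneg _)
    have h7 : n * (|y - x| * (ε / n)) = ε * |y - x| := by
      field_simp
    linarith [h3, h5, h6]
  have hV'cont : ContinuousOn (fun x : ℝ => n * μf x) (Set.Ici 0) :=
    continuousOn_const.mul hμf_cont
  have hVcont : ContinuousOn (Vopt T n η ℓ0) (Set.Ici 0) :=
    fun x hx => (hVderiv x hx).continuousWithinAt
  -- the unit price
  have hden : ∀ x ∈ Set.Ici (0:ℝ), x + alphaC ℓ0 T ≠ 0 := by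
    intro x hx
    have hx0 : (0:ℝ) ≤ x := hx
    positivity
  refine ⟨fun x => n * μf x,
    fun x => ((n * μf x) * (x + alphaC ℓ0 T) - Vopt T n η ℓ0 x * 1) / (x + alphaC ℓ0 T) ^ 2,
    hV'cont, ?_, hVderiv, ?_⟩
  · apply ContinuousOn.div
    · exact (hV'cont.mul ((continuous_id.continuousOn).add continuousOn_const)).sub
        (hVcont.mul continuousOn_const)
    · exact ((continuous_id.continuousOn).add continuousOn_const).pow 2
    · intro x hx
      exact pow_ne_zero 2 (hden x hx)
  · intro x hx
    have hd : HasDerivWithinAt (fun y : ℝ => y + alphaC ℓ0 T) 1 (Set.Ici 0) x :=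
      (hasDerivWithinAt_id x _).add_const _
    have hdiv := (hVderiv x hx).div hd (hden x hx)
    exact hdiv
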